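/- arXiv:1101.2728 — 12 statements merged into one kernel-verified Lean document; each statement's English description precedes it below -/
import Mathlib

section
/- An n×N matrix L over F_q corresponds to a δ-error-correcting index code for the instance (m,n,X,f) if and only if for every vector z ∈ F_q^n for which there exists i ∈ [m] with z restricted to X_i equal to zero and z_{f(i)} ≠ 0, the Hamming weight of zL is at least 2δ+1. -/
open Matrix

/-- An n×N matrix L over F_q corresponds to a δ-error-correcting index
code for the ICSI instance (m,n,X,f) (i.e., every receiver has a decoding function
recovering x_{f(i)} from the corrupted broadcast and its side information) if and
only if wt(zL) ≥ 2δ+1 for every z with z_{X_i} = 0 and z_{f(i)} ≠ 0 for some i. -/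
theorem ecic_iff_weight_condition {m n N : ℕ} {F : Type} [Field F] [Fintype F]
    [DecidableEq F]
    (X : Fin m → Finset (Fin n)) (f : Fin m → Fin n) (hf : ∀ i, f i ∉ X i)
    (δ : ℕ) (L : Matrix (Fin n) (Fin N) F) :
    (∀ i : Fin m, ∃ D : (Fin N → F) → ({j // j ∈ X i} → F) → F,
        ∀ (x : Fin n → F) (ε : Fin N → F), hammingNorm ε ≤ δ →
          D (vecMul x L + ε) (fun j => x j.1) = x (f i)) ↔
    (∀ z : Fin n → F, (∃ i : Fin m, (∀ j ∈ X i, z j = 0) ∧ z (f i) ≠ 0) →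
        2 * δ + 1 ≤ hammingNorm (vecMul z L)) := by
  classical
  constructor
  · -- decodability → weight condition
    rintro hD z ⟨i, hz0, hzf⟩
    by_contra hlt
    push_neg at hlt
    have hw : hammingNorm (vecMul z L) ≤ 2 * δ := by omega
    obtain ⟨D, hDspec⟩ := hD i
    set w := vecMul z L with hwdef
    -- split support of w
    set T : Finset (Fin N) := Finset.univ.filter (fun j => w j ≠ 0) with hT
    have hTcard : T.card = hammingNorm w := rfl
    obtain ⟨S, hST, hScard⟩ := Finset.exists_subset_card_eq (min_le_right δ T.card)
    have hS : S.card ≤ δ := hScard ▸ min_le_left _ _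
    set ε₁ : Fin N → F := fun j => if j ∈ S then w j else 0 with hε₁
    have hε₁norm : hammingNorm ε₁ ≤ δ := by
      refine le_trans (Finset.card_le_card ?_) hS
      intro j hj
      simp only [hammingNorm, Finset.mem_filter, hε₁] at hj
      by_contra hjs
      exact hj.2 (if_neg hjs)
    have hε₂norm : hammingNorm (ε₁ - w) ≤ δ := by
      have hsub : Finset.univ.filter (fun j => (ε₁ - w) j ≠ 0) ⊆ T \ S := by
        intro j hj
        simp only [Finset.mem_filter, Pi.sub_apply, hε₁] at hj
        rcases hj with ⟨-, hj⟩
        by_cases hjs : j ∈ S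
        · simp [hjs] at hj
        · simp only [hjs, if_false, zero_sub, neg_ne_zero] at hj
          exact Finset.mem_sdiff.mpr ⟨Finset.mem_filter.mpr ⟨Finset.mem_univ _, hj⟩, hjs⟩
      have := Finset.card_le_card hsub
      rw [Finset.card_sdiff_of_subset hST] at this
      have hmin : S.card = min δ T.card := hScard
      have : hammingNorm (ε₁ - w) ≤ T.card - min δ T.card := by
        rw [← hmin]; exact this
      rcases le_total δ T.card with h | h
      · rw [min_eq_left h] at this; omega
      · rw [min_eq_right h] at this; omega
    -- decode with x = 0
    have h1 : D ε₁ (fun _ => 0) = 0 := by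
      have := hDspec 0 ε₁ hε₁norm
      simpa using this
    -- decode with x = z
    have h2 : D ε₁ (fun _ => 0) = z (f i) := by
      have := hDspec z (ε₁ - w) hε₂norm
      have heq : vecMul z L + (ε₁ - w) = ε₁ := by
        rw [← hwdef]; ring
      rw [heq] at this
      have hside : (fun j : {j // j ∈ X i} => z j.1) = fun _ => (0 : F) := by
        funext j; exact hz0 j.1 j.2
      rw [hside] at this
      exact this
    rw [h1] at h2; exact hzf h2.symm
  · -- weight condition → decodability
    intro hw i
    refine ⟨fun y s =>
      if h : ∃ c : F, ∃ x : Fin n → F, (∀ j : {j // j ∈ X i}, x j.1 = s j) ∧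
          x (f i) = c ∧ hammingDist (vecMul x L) y ≤ δ
      then h.choose else 0, ?_⟩
    intro x ε hε
    set y := vecMul x L + ε with hy
    have hdx : hammingDist (vecMul x L) y ≤ δ := by
      rw [hammingDist_comm, hammingDist_eq_hammingNorm, hy]
      simpa [hammingNorm] using hε
    have hex : ∃ c : F, ∃ x' : Fin n → F,
        (∀ j : {j // j ∈ X i}, x' j.1 = (fun j : {j // j ∈ X i} => x j.1) j) ∧
        x' (f i) = c ∧ hammingDist (vecMul x' L) y ≤ δ :=
      ⟨x (f i), x, fun _ => rfl, rfl, hdx⟩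
    beta_reduce
    rw [dif_pos hex]
    obtain ⟨x', hside, hc, hdx'⟩ := hex.choose_spec
    by_contra hne
    have hzne : x' (f i) - x (f i) ≠ 0 := by
      intro h0
      apply hne
      rw [← hc, sub_eq_zero.mp h0]
    have hkey := hw (x' - x) ⟨i, ?_, ?_⟩
    · have : hammingNorm (vecMul (x' - x) L) ≤ 2 * δ := by
        rw [sub_vecMul, show x' ᵥ* L - x ᵥ* L = -(x ᵥ* L) + x' ᵥ* L by abel, ← hammingDist_eq_hammingNorm, hammingDist_comm]
        calc hammingDist (vecMul x' L) (vecMul x L)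
            ≤ hammingDist (vecMul x' L) y + hammingDist y (vecMul x L) :=
              hammingDist_triangle _ _ _
          _ ≤ δ + δ := by
              refine add_le_add hdx' ?_
              rw [hammingDist_comm]; exact hdx
          _ = 2 * δ := by ring
      omega
    · intro j hj
      have := hside ⟨j, hj⟩
      simp only [Pi.sub_apply]
      rw [this]; ring
    · simpa using hzne
end

section
/- An n×N matrix L over F_q corresponds to a δ-error-correcting index code for the instance described by hypergraph H if and only if for every i ∈ [m], the Hamming distance from the row L_{f(i)} to the linear span M_i of the rows {L_j : j ∈ Y_i} is at least 2δ+1, where Y_i = [n] \ ({f(i)} ∪ X_i). -/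
open Matrix

lemma vecMul_eq_sum' {n N : ℕ} {F : Type} [Field F] (z : Fin n → F)
    (L : Matrix (Fin n) (Fin N) F) : vecMul z L = ∑ j, z j • L j := by
  funext k
  simp [vecMul, dotProduct, Finset.sum_apply]

/-- L corresponds to a (δ,H)-ECIC (characterized by the weight
condition) iff for every i, the Hamming distance from the row L_{f(i)} to the
span M_i of the rows {L_j : j ∈ Y_i}, Y_i = [n] \ ({f(i)} ∪ X_i), is ≥ 2δ+1. -/
theorem ecic_iff_dist_to_span {m n N : ℕ} {F : Type} [Field F] [Fintype F]
    [DecidableEq F]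
    (X : Fin m → Finset (Fin n)) (f : Fin m → Fin n) (hf : ∀ i, f i ∉ X i)
    (δ : ℕ) (L : Matrix (Fin n) (Fin N) F) :
    (∀ z : Fin n → F, (∃ i : Fin m, (∀ j ∈ X i, z j = 0) ∧ z (f i) ≠ 0) →
        2 * δ + 1 ≤ hammingNorm (vecMul z L)) ↔
    (∀ i : Fin m, ∀ v ∈ Submodule.span F
        (L '' {j : Fin n | j ≠ f i ∧ j ∉ X i}),
      2 * δ + 1 ≤ hammingDist (L (f i)) v) := by
  constructor
  · intro h i v hv
    replace hv := (Finsupp.mem_span_image_iff_linearCombination F).mp hv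
    obtain ⟨l, hl, hlv⟩ := hv
    rw [Finsupp.mem_supported] at hl
    have hlX : ∀ j ∈ X i, l j = 0 := fun j hj => by
      by_contra hne
      exact (hl (Finsupp.mem_support_iff.mpr hne)).2 hj
    have hlf : l (f i) = 0 := by
      by_contra hne
      exact (hl (Finsupp.mem_support_iff.mpr hne)).1 rfl
    set z : Fin n → F := fun j => (if j = f i then 1 else 0) - l j with hz
    have hv' : v = ∑ j, l j • L j := by
      rw [← hlv]
      exact (Finsupp.linearCombination_apply F l).trans
        (Finsupp.sum_fintype _ _ (fun j => zero_smul F (L j)))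
    have key : vecMul z L = L (f i) - v := by
      rw [vecMul_eq_sum', hv']
      simp only [hz, sub_smul, Finset.sum_sub_distrib, ite_smul, one_smul,
        zero_smul, Finset.sum_ite_eq', Finset.sum_ite_eq, Finset.mem_univ, if_true]
      congr 1
      exact (Finset.sum_ite_eq' Finset.univ (f i) (fun j => L j)).trans (if_pos (Finset.mem_univ _))
    rw [hammingDist_comm, hammingDist_eq_hammingNorm, neg_add_eq_sub, ← key]
    refine h z ⟨i, fun j hj => ?_, ?_⟩
    · have hjf : j ≠ f i := fun hje => hf i (hje ▸ hj)
      simp [hz, hlX j hj, hjf]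
    · simp [hz, hlf]
  · intro h z ⟨i, hz0, hzf⟩
    set c := z (f i) with hc
    set v : Fin N → F := L (f i) - c⁻¹ • vecMul z L with hv
    have hvmem : v ∈ Submodule.span F (L '' {j : Fin n | j ≠ f i ∧ j ∉ X i}) := by
      have : v = ∑ j ∈ Finset.univ.filter (· ≠ f i), (-(c⁻¹ * z j)) • L j := by
        rw [hv, vecMul_eq_sum', Finset.smul_sum]
        rw [← Finset.sum_filter_add_sum_filter_not Finset.univ (· ≠ f i)
          (fun j => c⁻¹ • z j • L j)]
        have : ∑ j ∈ Finset.univ.filter (¬ · ≠ f i), c⁻¹ • z j • L j = L (f i) := by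
          rw [Finset.sum_filter]
          simp only [not_not, smul_smul]
          rw [Finset.sum_ite_eq' Finset.univ (f i) (fun j => (c⁻¹ * z j) • L j)]
          simp [inv_mul_cancel₀ hzf, ← hc]
        rw [this]
        simp only [neg_smul, smul_smul, Finset.sum_neg_distrib]
        abel
      rw [this]
      refine Submodule.sum_mem _ (fun j hj => ?_)
      by_cases hjX : j ∈ X i
      · simp [hz0 j hjX]
      · exact Submodule.smul_mem _ _ (Submodule.subset_span
          ⟨j, ⟨(Finset.mem_filter.mp hj).2, hjX⟩, rfl⟩)
    have := h i v hvmem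
    rw [hammingDist_comm, hammingDist_eq_hammingNorm, hv, neg_add_eq_sub, sub_sub_cancel] at this
    rwa [hammingNorm_smul (fun k => (isRegular_of_ne_zero
      (inv_ne_zero hzf)).left.isSMulRegular) ] at this
end

section
/- Let a = α(H) be the generalized independence number of the side information hypergraph H. If there exists a linear δ-error-correcting index code over F_q of length N for the instance described by H, then there exists a linear code over F_q of length N, dimension a, and minimum Hamming distance at least 2δ+1. Consequently the optimal length N_q(H,δ) satisfies N_q(H,δ) ≥ N_q[α(H), 2δ+1], where N_q[k,d] is the shortest length of a linear code of dimension k and minimum distance d. -/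
open Matrix

/-- The collection J(H): sets of the form {f(i)} ∪ Y with Y ⊆ Y_i = [n]\({f(i)} ∪ X_i). -/
def inJ {m n : ℕ} (X : Fin m → Finset (Fin n)) (f : Fin m → Fin n)
    (K : Finset (Fin n)) : Prop :=
  ∃ i : Fin m, f i ∈ K ∧ ∀ j ∈ K, j ≠ f i → j ∉ X i

/-- A generalized independent set: every nonempty subset belongs to J(H). -/
def GenIndep {m n : ℕ} (X : Fin m → Finset (Fin n)) (f : Fin m → Fin n)
    (S : Finset (Fin n)) : Prop :=
  ∀ K ⊆ S, K.Nonempty → inJ X f K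

/-- L corresponds to a (δ,H)-ECIC. -/
def IsECIC {m n N : ℕ} {F : Type} [Field F] [DecidableEq F]
    (X : Fin m → Finset (Fin n)) (f : Fin m → Fin n) (δ : ℕ)
    (L : Matrix (Fin n) (Fin N) F) : Prop :=
  ∀ z : Fin n → F, (∃ i : Fin m, (∀ j ∈ X i, z j = 0) ∧ z (f i) ≠ 0) →
    2 * δ + 1 ≤ hammingNorm (vecMul z L)

lemma key_lemma {m n N' : ℕ} {F : Type} [Field F] [DecidableEq F]
    (X : Fin m → Finset (Fin n)) (f : Fin m → Fin n) (hf : ∀ i, f i ∉ X i)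
    (δ a : ℕ) (S : Finset (Fin n)) (hcard : S.card = a) (hS : GenIndep X f S)
    (L' : Matrix (Fin n) (Fin N') F) (hL' : IsECIC X f δ L') :
    ∃ G : Matrix (Fin a) (Fin N') F,
      ∀ u : Fin a → F, u ≠ 0 → 2 * δ + 1 ≤ hammingNorm (vecMul u G) := by
  classical
  let e : Fin a ≃o {x // x ∈ S} := S.orderIsoOfFin hcard
  refine ⟨fun k => L' (e k), fun u hu => ?_⟩
  set z : Fin n → F := fun j => if h : j ∈ S then u (e.symm ⟨j, h⟩) else 0 with hz
  have hzS : ∀ j, j ∉ S → z j = 0 := by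
    intro j hj; simp [hz, hj]
  have hmul : vecMul z L' = vecMul u (fun k => L' (e k)) := by
    funext j'
    simp only [vecMul, dotProduct]
    have h1 : ∑ x : Fin n, z x * L' x j' = ∑ x ∈ S, z x * L' x j' := by
      rw [← Finset.sum_subset (Finset.subset_univ S)]
      intro x _ hx; rw [hzS x hx, zero_mul]
    rw [h1]
    rw [← Finset.sum_attach S (fun x => z x * L' x j'), ← Finset.univ_eq_attach]
    rw [← Equiv.sum_comp e.toEquiv (fun s : {x // x ∈ S} => z s * L' s j')]
    refine Finset.sum_congr rfl fun k _ => ?_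
    have : z (e k) = u k := by
      have h : ((e k : {x // x ∈ S}) : Fin n) ∈ S := (e k).2
      simp only [hz, dif_pos h]
      congr 1
      have : (⟨((e k : {x // x ∈ S}) : Fin n), h⟩ : {x // x ∈ S}) = e k := rfl
      rw [this, OrderIso.symm_apply_apply]
    rw [show e.toEquiv k = e k from rfl, this]
  rw [← hmul]
  apply hL'
  -- find the index i
  set K : Finset (Fin n) := S.filter (fun j => z j ≠ 0) with hK
  have hKS : K ⊆ S := Finset.filter_subset _ _
  have hKne : K.Nonempty := by
    obtain ⟨k, hk⟩ : ∃ k, u k ≠ 0 := Function.ne_iff.mp hu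
    refine ⟨(e k : Fin n), Finset.mem_filter.mpr ⟨(e k).2, ?_⟩⟩
    have : z (e k) = u k := by
      have h : ((e k : {x // x ∈ S}) : Fin n) ∈ S := (e k).2
      simp only [hz, dif_pos h]
      congr 1
      have : (⟨((e k : {x // x ∈ S}) : Fin n), h⟩ : {x // x ∈ S}) = e k := rfl
      rw [this, OrderIso.symm_apply_apply]
    rw [this]; exact hk
  obtain ⟨i, hfi, hXi⟩ := hS K hKS hKne
  refine ⟨i, ?_, ?_⟩
  · intro j hj
    by_contra hzj
    have hjS : j ∈ S := by
      by_contra h; exact hzj (hzS j h)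
    have hjK : j ∈ K := Finset.mem_filter.mpr ⟨hjS, hzj⟩
    have hjne : j ≠ f i := by
      rintro rfl; exact hf i hj
    exact hXi j hjK hjne hj
  · exact (Finset.mem_filter.mp hfi).2

/-- α-bound: if a = α(H) and L is a linear (δ,H)-ECIC of length N,
then there is a linear [N, a, ≥ 2δ+1]_q code; consequently
N_q(H,δ) ≥ N_q[α(H), 2δ+1]. -/
theorem alpha_bound {m n N : ℕ} {F : Type} [Field F] [Fintype F] [DecidableEq F]
    (X : Fin m → Finset (Fin n)) (f : Fin m → Fin n) (hf : ∀ i, f i ∉ X i)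
    (δ a : ℕ)
    (ha : a = sSup {k : ℕ | ∃ S : Finset (Fin n), S.card = k ∧ GenIndep X f S})
    (L : Matrix (Fin n) (Fin N) F) (hL : IsECIC X f δ L) :
    (∃ G : Matrix (Fin a) (Fin N) F,
        ∀ u : Fin a → F, u ≠ 0 → 2 * δ + 1 ≤ hammingNorm (vecMul u G)) ∧
    sInf {N' : ℕ | ∃ G : Matrix (Fin a) (Fin N') F,
          ∀ u : Fin a → F, u ≠ 0 → 2 * δ + 1 ≤ hammingNorm (vecMul u G)} ≤
      sInf {N' : ℕ | ∃ L' : Matrix (Fin n) (Fin N') F, IsECIC X f δ L'} := by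
  classical
  have hamem : a ∈ {k : ℕ | ∃ S : Finset (Fin n), S.card = k ∧ GenIndep X f S} := by
    rw [ha]
    apply Nat.sSup_mem
    · refine ⟨0, ∅, Finset.card_empty, fun K hK hKne => ?_⟩
      rw [Finset.subset_empty.mp hK] at hKne
      exact absurd hKne (by simp)
    · exact ⟨n, fun k ⟨S, hS, _⟩ => hS ▸ (S.card_le_univ.trans (by simp))⟩
  obtain ⟨S, hcard, hS⟩ := hamem
  constructor
  · exact key_lemma X f hf δ a S hcard hS L hL
  · have hne : {N' : ℕ | ∃ L' : Matrix (Fin n) (Fin N') F, IsECIC X f δ L'}.Nonempty :=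
      ⟨N, L, hL⟩
    obtain ⟨L', hL'⟩ := Nat.sInf_mem hne
    exact Nat.sInf_le (key_lemma X f hf δ a S hcard hS L' hL')
end

section
/- If a matrix L corresponds to a δ-error-correcting index code over F_q for instance H, then the matrix L' obtained from L by deleting any 2δ columns corresponds to a (0-error-correcting) index code for H. -/
open Matrix

/-- deleting any 2δ columns from a (δ,H)-ECIC matrix yields a matrix
corresponding to an ordinary (0-error-correcting) index code for H. -/
theorem delete_columns_index_code {m n N : ℕ} {F : Type} [Field F] [Fintype F]
    [DecidableEq F]
    (X : Fin m → Finset (Fin n)) (f : Fin m → Fin n) (hf : ∀ i, f i ∉ X i)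
    (δ : ℕ) (L : Matrix (Fin n) (Fin N) F)
    (hL : ∀ z : Fin n → F, (∃ i : Fin m, (∀ j ∈ X i, z j = 0) ∧ z (f i) ≠ 0) →
      2 * δ + 1 ≤ hammingNorm (vecMul z L))
    (S : Finset (Fin N)) (hS : S.card = 2 * δ) :
    ∀ z : Fin n → F, (∃ i : Fin m, (∀ j ∈ X i, z j = 0) ∧ z (f i) ≠ 0) →
      1 ≤ hammingNorm (vecMul z (fun i (j : {j : Fin N // j ∉ S}) => L i j.1)) := by
  intro z hz
  have h1 := hL z hz
  set w : Fin N → F := vecMul z L with hw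
  have hrestr : ∀ j : {j : Fin N // j ∉ S},
      vecMul z (fun i (j : {j : Fin N // j ∉ S}) => L i j.1) j = w j.1 := by
    intro j
    simp [vecMul, dotProduct, hw]
  -- counting
  unfold hammingNorm at *
  have hsub : (Finset.univ.filter fun j : Fin N => w j ≠ 0) ⊆
      ((Finset.univ.filter fun j : {j : Fin N // j ∉ S} =>
        vecMul z (fun i (j : {j : Fin N // j ∉ S}) => L i j.1) j ≠ 0).image
        (fun j => j.1)) ∪ S := by
    intro j hj
    simp only [Finset.mem_filter, Finset.mem_univ, true_and] at hj
    by_cases hjS : j ∈ S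
    · exact Finset.mem_union_right _ hjS
    · refine Finset.mem_union_left _ ?_
      refine Finset.mem_image.mpr ⟨⟨j, hjS⟩, ?_, rfl⟩
      simp only [Finset.mem_filter, Finset.mem_univ, true_and]
      rw [hrestr]
      exact hj
  have hcard := Finset.card_le_card hsub
  have h2 := le_trans hcard (le_trans (Finset.card_union_le _ _)
    (Nat.add_le_add_right (Finset.card_image_le) _))
  omega
end

section
/- (κ-bound) If G is an n×κ matrix corresponding to a linear index code for H (κ = κ_q(H)) and M is a generator matrix of a linear [N, κ, 2δ+1]_q code, then the matrix L = GM corresponds to a δ-error-correcting index code for H. Consequently, N_q(H,δ) ≤ N_q[κ_q(H), 2δ+1]. -/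
open Matrix

/-- The min-rank κ_q(H) of the side information hypergraph over the field F. -/
noncomputable def minrank (F : Type) [Field F] {m n : ℕ}
    (X : Fin m → Finset (Fin n)) (f : Fin m → Fin n) : ℕ :=
  sInf {r : ℕ | ∃ v : Fin m → (Fin n → F),
    (∀ i, Function.support (v i) ⊆ (X i : Set (Fin n))) ∧
    Module.finrank F (Submodule.span F
      (Set.range fun i => v i + Pi.single (f i) (1 : F))) = r}

/-- Repetition code: a k×(k*d) generator matrix with minimum distance ≥ d. -/
lemma rep_code (F : Type) [Field F] [DecidableEq F] (k d : ℕ) (hd : 0 < d) :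
    ∃ M' : Matrix (Fin k) (Fin (k * d)) F,
      ∀ u : Fin k → F, u ≠ 0 → d ≤ hammingNorm (vecMul u M') := by
  have hlt : ∀ j : Fin (k * d), (j : ℕ) / d < k := fun j =>
    Nat.div_lt_of_lt_mul (by simpa [mul_comm] using j.2)
  set M' : Matrix (Fin k) (Fin (k * d)) F :=
    Matrix.of fun i j => if ((j : ℕ) / d : ℕ) = (i : ℕ) then 1 else 0 with hM'
  refine ⟨M', fun u hu => ?_⟩
  obtain ⟨i0, hi0⟩ := Function.ne_iff.mp hu
  have hi0' : u i0 ≠ 0 := by simpa using hi0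
  have hval : ∀ j : Fin (k * d), vecMul u M' j = u ⟨(j : ℕ) / d, hlt j⟩ := by
    intro j
    simp only [vecMul, dotProduct, hM', Matrix.of_apply]
    rw [Finset.sum_eq_single (⟨(j : ℕ) / d, hlt j⟩ : Fin k)]
    · simp
    · intro b _ hb
      have : (j : ℕ) / d ≠ (b : ℕ) := by
        intro h
        exact hb (Fin.ext (by simp [← h]))
      simp [this]
    · simp
  unfold hammingNorm
  have hmap : ∀ r : Fin d, (i0 : ℕ) * d + (r : ℕ) < k * d := by
    intro r
    calc (i0 : ℕ) * d + (r : ℕ) < (i0 : ℕ) * d + d := by omega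
    _ = ((i0 : ℕ) + 1) * d := by ring
    _ ≤ k * d := Nat.mul_le_mul_right d i0.2
  have hcard := Finset.card_le_card_of_injOn
    (f := fun r : Fin d => (⟨(i0 : ℕ) * d + (r : ℕ), hmap r⟩ : Fin (k * d)))
    (s := (Finset.univ : Finset (Fin d)))
    (t := Finset.univ.filter fun j : Fin (k * d) => vecMul u M' j ≠ 0)
    ?_ ?_
  · simpa using hcard
  · intro r _
    simp only [Finset.mem_coe, Finset.mem_filter, Finset.mem_univ, true_and]
    rw [hval]
    have hdiv : ((i0 : ℕ) * d + (r : ℕ)) / d = (i0 : ℕ) := by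
      rw [mul_comm, Nat.mul_add_div hd, Nat.div_eq_of_lt r.2, add_zero]
    have heq : (⟨(((⟨(i0 : ℕ) * d + (r : ℕ), hmap r⟩ : Fin (k * d)) : ℕ)) / d, hlt _⟩ : Fin k) = i0 :=
      Fin.ext (by simpa using hdiv)
    rw [heq]
    exact hi0'
  · intro r1 _ r2 _ h
    have h' := congrArg Fin.val h
    simp only [] at h'
    apply Fin.ext
    omega

lemma ecic_comp {m n N k : ℕ} {F : Type} [Field F] [DecidableEq F]
    (X : Fin m → Finset (Fin n)) (f : Fin m → Fin n) (δ : ℕ)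
    (G : Matrix (Fin n) (Fin k) F) (hG : IsECIC X f 0 G)
    (M : Matrix (Fin k) (Fin N) F)
    (hM : ∀ u : Fin k → F, u ≠ 0 → 2 * δ + 1 ≤ hammingNorm (vecMul u M)) :
    IsECIC X f δ (G * M) := by
  intro z hz
  have h1 := hG z hz
  have hne : vecMul z G ≠ 0 := by
    intro h
    rw [h] at h1
    simp [hammingNorm] at h1
  rw [← vecMul_vecMul]
  exact hM _ hne


/-- κ-bound: if G is an n×κ matrix corresponding to a linear index
code for H (κ = κ_q(H)) and M generates an [N,κ,≥2δ+1]_q code, then L = G*M is a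
(δ,H)-ECIC; consequently N_q(H,δ) ≤ N_q[κ_q(H), 2δ+1]. -/
theorem kappa_bound {m n N : ℕ} {F : Type} [Field F] [Fintype F] [DecidableEq F]
    (X : Fin m → Finset (Fin n)) (f : Fin m → Fin n) (hf : ∀ i, f i ∉ X i)
    (δ k : ℕ) (hk : k = minrank F X f)
    (G : Matrix (Fin n) (Fin k) F) (hG : IsECIC X f 0 G)
    (M : Matrix (Fin k) (Fin N) F)
    (hM : ∀ u : Fin k → F, u ≠ 0 → 2 * δ + 1 ≤ hammingNorm (vecMul u M)) :
    IsECIC X f δ (G * M) ∧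
    sInf {N' : ℕ | ∃ L' : Matrix (Fin n) (Fin N') F, IsECIC X f δ L'} ≤
      sInf {N' : ℕ | ∃ M' : Matrix (Fin k) (Fin N') F,
        ∀ u : Fin k → F, u ≠ 0 → 2 * δ + 1 ≤ hammingNorm (vecMul u M')} := by
  refine ⟨ecic_comp X f δ G hG M hM, ?_⟩
  apply csInf_le_csInf (OrderBot.bddBelow _)
  · obtain ⟨M', hM'⟩ := rep_code F k (2 * δ + 1) (by omega)
    exact ⟨k * (2 * δ + 1), M', hM'⟩
  · rintro N' ⟨M', hM'⟩
    exact ⟨G * M', ecic_comp X f δ G hG M' hM'⟩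
end

section
/- (MDS error-correcting index codes) If q ≥ κ_q(H) + 2δ - 1, then the optimal length of a linear δ-error-correcting index code over F_q equals κ_q(H) + 2δ. -/
open Matrix

section lower

set_option linter.unusedSectionVars false
variable {m n N : ℕ} {F : Type} [Field F] [DecidableEq F]

/-- the submodule of vectors supported inside `X i`. -/
def suppSub (X : Fin m → Finset (Fin n)) (i : Fin m) : Submodule F (Fin n → F) :=
  Submodule.pi ((X i : Set (Fin n))ᶜ) (fun _ => ⊥)

lemma mem_suppSub {X : Fin m → Finset (Fin n)} {i : Fin m} {u : Fin n → F} :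
    u ∈ suppSub X i ↔ ∀ j, j ∉ X i → u j = 0 := by
  simp [suppSub, Submodule.mem_pi]

lemma single_mem_suppSub {X : Fin m → Finset (Fin n)} {i : Fin m} {j : Fin n}
    (hj : j ∈ X i) (a : F) : (Pi.single j a : Fin n → F) ∈ suppSub X i := by
  refine mem_suppSub.mpr fun k hk => ?_
  have hkj : k ≠ j := fun h => hk (by rw [h]; exact hj)
  simp [Pi.single_eq_of_ne hkj]

/-- dual separation: if `x ∉ U` there is a functional vanishing on `U`, nonzero at `x`. -/
lemma exists_functional {V : Type} [AddCommGroup V] [Module F V]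
    {U : Submodule F V} {x : V} (hx : x ∉ U) :
    ∃ φ : V →ₗ[F] F, (∀ u ∈ U, φ u = 0) ∧ φ x ≠ 0 := by
  have hx' : U.mkQ x ≠ 0 := by
    simpa [Submodule.Quotient.mk_eq_zero] using hx
  have := (Module.forall_dual_apply_eq_zero_iff F (U.mkQ x)).not.mpr hx'
  push_neg at this
  obtain ⟨g, hg⟩ := this
  refine ⟨g.comp U.mkQ, ?_, hg⟩
  intro u hu
  simp [Submodule.Quotient.mk_eq_zero U |>.mpr hu, (Submodule.Quotient.mk_eq_zero U).mpr hu]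

lemma ecic_lower (X : Fin m → Finset (Fin n)) (f : Fin m → Fin n)
    (hf : ∀ i, f i ∉ X i) (hm : 0 < m) (δ : ℕ)
    (L : Matrix (Fin n) (Fin N) F) (hL : IsECIC X f δ L) :
    minrank F X f + 2 * δ ≤ N := by
  classical
  -- a "bad" vector exists, giving N ≥ 2δ+1
  set i0 : Fin m := ⟨0, hm⟩
  have h1 : 2 * δ + 1 ≤ hammingNorm (vecMul (Pi.single (f i0) (1:F)) L) :=
    hL (Pi.single (f i0) (1:F))
      ⟨i0, fun j hj => Pi.single_eq_of_ne (fun h : j = f i0 => hf i0 (by rw [← h]; exact hj)) 1,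
        by simp⟩
  have hN : 2 * δ + 1 ≤ N := by
    have h2 : hammingNorm (vecMul (Pi.single (f i0) (1:F)) L) ≤ N := by
      simpa using hammingNorm_le_card_fintype (x := vecMul (Pi.single (f i0) (1:F)) L)
    omega
  -- choose N - 2δ coordinates
  obtain ⟨S, -, hScard⟩ := Finset.exists_subset_card_eq
    (show N - 2*δ ≤ (Finset.univ : Finset (Fin N)).card by simp)
  set T : Finset (Fin n → F) := S.image (fun k => fun j => L j k) with hT
  set C : Submodule F (Fin n → F) := Submodule.span F (T : Set (Fin n → F)) with hC
  -- e_{f i} ∈ C ⊔ suppSub i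
  have hmem : ∀ i : Fin m, Pi.single (f i) (1:F) ∈ C ⊔ suppSub X i := by
    intro i
    by_contra hx
    obtain ⟨φ, hφU, hφx⟩ := exists_functional hx
    set z : Fin n → F := fun j => φ (Pi.single j 1) with hz
    have hφeq : ∀ w : Fin n → F, φ w = ∑ j, w j * z j := by
      intro w
      conv_lhs => rw [pi_eq_sum_univ w]
      rw [map_sum]
      refine Finset.sum_congr rfl fun j _ => ?_
      have hs : (fun j' => if j = j' then (1:F) else 0) = Pi.single j 1 := by
        funext j'
        simp [Pi.single_apply, eq_comm]
      rw [hs, _root_.map_smul, smul_eq_mul]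
    have hbad : (∀ j ∈ X i, z j = 0) ∧ z (f i) ≠ 0 := by
      constructor
      · intro j hj
        exact hφU _ (Submodule.mem_sup_right (single_mem_suppSub hj 1))
      · exact hφx
    have h1 := hL z ⟨i, hbad.1, hbad.2⟩
    -- but vecMul z L vanishes on S
    have hzero : ∀ k ∈ S, vecMul z L k = 0 := by
      intro k hk
      have hcol : (fun j => L j k) ∈ C :=
        Submodule.subset_span (by exact Finset.mem_coe.mpr (Finset.mem_image_of_mem _ hk))
      have := hφU _ (Submodule.mem_sup_left hcol)
      rw [hφeq] at this
      simpa [vecMul, dotProduct, mul_comm] using this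
    have hsub : ({k | vecMul z L k ≠ 0} : Finset (Fin N)) ⊆ Sᶜ := by
      intro k hk
      simp only [Finset.mem_filter] at hk
      simp only [Finset.mem_compl]
      intro hkS
      exact hk.2 (hzero k hkS)
    have hle : hammingNorm (vecMul z L) ≤ 2 * δ := by
      have := Finset.card_le_card hsub
      rw [Finset.card_compl, hScard] at this
      simp only [Fintype.card_fin] at this
      calc hammingNorm (vecMul z L) = ({k | vecMul z L k ≠ 0} : Finset (Fin N)).card := rfl
        _ ≤ N - (N - 2*δ) := this
        _ ≤ 2 * δ := by omega
    omega
  -- extract v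
  have hchoice : ∀ i : Fin m, ∃ v : Fin n → F,
      Function.support v ⊆ (X i : Set (Fin n)) ∧ v + Pi.single (f i) 1 ∈ C := by
    intro i
    obtain ⟨y, hy, u, hu, hyu⟩ := Submodule.mem_sup.mp (hmem i)
    refine ⟨-u, ?_, ?_⟩
    · intro j hj
      simp only [Function.mem_support, Pi.neg_apply, neg_ne_zero] at hj
      by_contra hjX
      exact hj (mem_suppSub.mp hu j hjX)
    · have : -u + Pi.single (f i) 1 = y := by
        rw [← hyu]; abel
      rw [this]; exact hy
  choose v hvsupp hvC using hchoice
  have hspan : Submodule.span F (Set.range fun i => v i + Pi.single (f i) (1:F)) ≤ C :=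
    Submodule.span_le.mpr (by rintro _ ⟨i, rfl⟩; exact hvC i)
  have hrank : Module.finrank F (Submodule.span F
      (Set.range fun i => v i + Pi.single (f i) (1:F))) ≤ N - 2*δ := by
    have h1 : Module.finrank F (Submodule.span F
        (Set.range fun i => v i + Pi.single (f i) (1:F))) ≤ Module.finrank F C :=
      Submodule.finrank_mono hspan
    have h2 : Module.finrank F C ≤ T.card := finrank_span_finset_le_card T
    have h3 : T.card ≤ S.card := Finset.card_image_le
    omega
  have hmr : minrank F X f ≤ N - 2*δ := by
    refine le_trans (Nat.sInf_le ⟨v, hvsupp, rfl⟩) hrank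
  omega

end lower

section upper

set_option linter.unusedSectionVars false

open Polynomial in
lemma ecic_upper {m n : ℕ} {F : Type} [Field F] [Fintype F] [DecidableEq F]
    (X : Fin m → Finset (Fin n)) (f : Fin m → Fin n) (hf : ∀ i, f i ∉ X i)
    (hm : 0 < m)
    (δ : ℕ) (hq : minrank F X f + 2 * δ - 1 ≤ Fintype.card F) :
    ∃ L : Matrix (Fin n) (Fin (minrank F X f + 2*δ)) F, IsECIC X f δ L := by
  classical
  obtain ⟨κ, hκdef⟩ : ∃ κ, minrank F X f = κ := ⟨_, rfl⟩
  rw [hκdef]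
  rw [hκdef] at hq
  -- the defining set of minrank is nonempty, so the inf is attained
  have hne : {r : ℕ | ∃ v : Fin m → (Fin n → F),
      (∀ i, Function.support (v i) ⊆ (X i : Set (Fin n))) ∧
      Module.finrank F (Submodule.span F
        (Set.range fun i => v i + Pi.single (f i) (1 : F))) = r}.Nonempty := by
    exact ⟨_, fun _ => (0 : Fin n → F), fun i => by simp, rfl⟩
  obtain ⟨v, hvsupp, hvrank0⟩ := Nat.sInf_mem hne
  set w : Fin m → (Fin n → F) := fun i => v i + Pi.single (f i) 1 with hw
  set W : Submodule F (Fin n → F) := Submodule.span F (Set.range w) with hW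
  have hvrank : Module.finrank F W = κ := by
    rw [← hκdef]; exact hvrank0
  clear hvrank0 hne hκdef
  have hκpos : 1 ≤ κ := by
    by_contra h
    have h0 : Module.finrank F W = 0 := by omega
    have hWbot : W = ⊥ := Submodule.finrank_eq_zero.mp h0
    have hw0 : w ⟨0, hm⟩ = 0 := by
      have : w ⟨0, hm⟩ ∈ W := Submodule.subset_span ⟨⟨0, hm⟩, rfl⟩
      rwa [hWbot, Submodule.mem_bot] at this
    have : v ⟨0, hm⟩ (f ⟨0, hm⟩) = -1 := by
      have h1 := congrFun hw0 (f ⟨0, hm⟩)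
      simp only [hw, Pi.add_apply, Pi.single_eq_same, Pi.zero_apply] at h1
      exact eq_neg_of_add_eq_zero_left h1
    have hmem : f ⟨0, hm⟩ ∈ (X ⟨0, hm⟩ : Set (Fin n)) :=
      hvsupp ⟨0, hm⟩ (by simp [Function.mem_support, this])
    exact hf ⟨0, hm⟩ hmem
  -- basis of W
  have : FiniteDimensional F W := inferInstance
  let b : Module.Basis (Fin κ) F W := Module.finBasisOfFinrankEq F W hvrank
  set B : Matrix (Fin n) (Fin κ) F := fun j t => (b t : Fin n → F) j with hB
  -- distinct evaluation points
  obtain ⟨ι⟩ : Nonempty (Fin (κ + 2*δ - 1) ↪ F) :=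
    Function.Embedding.nonempty_of_card_le (by simpa using hq)
  set G : Matrix (Fin κ) (Fin (κ + 2*δ)) F := fun t k =>
    if h : (k : ℕ) < κ + 2*δ - 1 then (ι ⟨k, h⟩) ^ (t:ℕ)
    else if (t : ℕ) = κ - 1 then 1 else 0 with hG
  refine ⟨B * G, ?_⟩
  rintro z ⟨i, hzX, hzf⟩
  rw [← Matrix.vecMul_vecMul]
  set c : Fin κ → F := vecMul z B with hc
  -- c ≠ 0
  have hcne : c ≠ 0 := by
    intro h0
    -- z annihilates every basis vector, hence all of W, hence w i; contradiction
    let ψ : (Fin n → F) →ₗ[F] F :=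
      { toFun := fun x => ∑ j, z j * x j
        map_add' := by
          intro x y
          simp [mul_add, Finset.sum_add_distrib]
        map_smul' := by
          intro r x
          simp [Finset.mul_sum, mul_left_comm] }
    have hψb : ∀ t, ψ (b t : Fin n → F) = 0 := by
      intro t
      have := congrFun h0 t
      simpa [hc, vecMul, dotProduct, hB, ψ] using this
    have hψW : ∀ x ∈ W, ψ x = 0 := by
      intro x hx
      have hcomp : ψ.comp W.subtype = 0 := by
        apply b.ext
        intro t
        simpa using hψb t
      have := congrArg (fun g => g ⟨x, hx⟩) hcomp
      simpa using this
    have hwi := hψW (w i) (Submodule.subset_span ⟨i, rfl⟩)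
    have hsplit : ψ (w i) = (∑ j, z j * v i j) + z (f i) := by
      simp only [ψ, hw, LinearMap.coe_mk, AddHom.coe_mk, Pi.add_apply, mul_add,
        Finset.sum_add_distrib]
      congr 1
      rw [Finset.sum_eq_single (f i)]
      · simp
      · intro j _ hj
        simp [Pi.single_eq_of_ne hj]
      · simp
    have hz0 : ∑ j, z j * v i j = 0 := by
      apply Finset.sum_eq_zero
      intro j _
      by_cases hvj : v i j = 0
      · simp [hvj]
      · have : j ∈ X i := hvsupp i hvj
        simp [hzX j this]
    rw [hsplit, hz0, zero_add] at hwi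
    exact hzf hwi
  -- the polynomial
  set p : F[X] := ∑ t : Fin κ, Polynomial.C (c t) * Polynomial.X ^ (t:ℕ) with hp
  have hcoeff : ∀ t : Fin κ, p.coeff (t:ℕ) = c t := by
    intro t
    rw [hp, Polynomial.finset_sum_coeff]
    rw [Finset.sum_eq_single t]
    · simp
    · intro s _ hst
      have : (s:ℕ) ≠ (t:ℕ) := fun h => hst (Fin.ext h)
      simp [Polynomial.coeff_C_mul, Polynomial.coeff_X_pow, this, if_neg (Ne.symm this)]
    · simp
  have hpne : p ≠ 0 := by
    intro h0
    apply hcne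
    funext t
    have := hcoeff t
    rw [h0] at this
    simpa using this.symm
  set lastt : Fin κ := ⟨κ - 1, by omega⟩ with hlastt
  -- evaluation formulas
  set u : Fin (κ + 2*δ) → F := vecMul c G with hu
  have huval : ∀ k : Fin (κ + 2*δ), ∀ h : (k:ℕ) < κ + 2*δ - 1,
      u k = p.eval (ι ⟨k, h⟩) := by
    intro k h
    rw [hu, hp]
    simp only [vecMul, dotProduct, Polynomial.eval_finset_sum, Polynomial.eval_mul,
      Polynomial.eval_C, Polynomial.eval_pow, Polynomial.eval_X]
    refine Finset.sum_congr rfl fun t _ => ?_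
    rw [hG]
    simp [dif_pos h]
  have hulast : ∀ k : Fin (κ + 2*δ), ¬((k:ℕ) < κ + 2*δ - 1) → u k = c lastt := by
    intro k h
    rw [hu]
    simp only [vecMul, dotProduct, hG]
    rw [Finset.sum_eq_single lastt]
    · simp [dif_neg h, hlastt]
    · intro s _ hst
      have : (s:ℕ) ≠ κ - 1 := by
        intro hh
        exact hst (by apply Fin.ext; simp [hlastt, hh])
      simp [dif_neg h, this]
    · simp
  -- zero set bound
  set Zset : Finset (Fin (κ + 2*δ)) := {k | u k = 0} with hZ
  set Zsm : Finset (Fin (κ + 2*δ)) := Zset.filter (fun k => (k:ℕ) < κ + 2*δ - 1) with hZsm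
  have hZsmcard : Zsm.card ≤ p.natDegree := by
    have hmaps : ∀ k ∈ Zsm, (fun k : Fin (κ + 2*δ) =>
        if h : (k:ℕ) < κ + 2*δ - 1 then ι ⟨k, h⟩ else 0) k ∈ p.roots.toFinset := by
      intro k hk
      rw [hZsm, Finset.mem_filter] at hk
      obtain ⟨hk1, hk2⟩ := hk
      simp only [dif_pos hk2]
      rw [Multiset.mem_toFinset, Polynomial.mem_roots hpne]
      have : u k = 0 := by
        rw [hZ] at hk1; simpa using hk1
      rw [huval k hk2] at this
      exact this
    have hinj : Set.InjOn (fun k : Fin (κ + 2*δ) => if h : (k:ℕ) < κ + 2*δ - 1 then ι ⟨k, h⟩ else 0) (Zsm : Set (Fin (κ + 2*δ))) := by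
      intro k1 hk1 k2 hk2 heq
      simp only [hZsm, Finset.coe_filter, Set.mem_setOf_eq] at hk1 hk2
      obtain ⟨-, h1⟩ := hk1
      obtain ⟨-, h2⟩ := hk2
      simp only [dif_pos h1, dif_pos h2] at heq
      have := ι.injective heq
      exact Fin.ext (by simpa using congrArg Fin.val this)
    calc Zsm.card ≤ p.roots.toFinset.card := Finset.card_le_card_of_injOn _ hmaps hinj
      _ ≤ Multiset.card p.roots := Multiset.toFinset_card_le _
      _ ≤ p.natDegree := Polynomial.card_roots' p
  have hZcard : Zset.card ≤ κ - 1 := by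
    by_cases hcl : c lastt = 0
    · -- κ ≥ 2 and natDegree ≤ κ - 2
      obtain ⟨t0, ht0⟩ : ∃ t, c t ≠ 0 := by
        by_contra h
        push_neg at h
        exact hcne (funext h)
      have hκ2 : 2 ≤ κ := by
        by_contra h
        have : κ = 1 := by omega
        have : t0 = lastt := by
          apply Fin.ext
          omega
        rw [this] at ht0
        exact ht0 hcl
      have hdeg2 : p.natDegree ≤ κ - 2 := by
        rw [hp]
        apply Polynomial.natDegree_sum_le_of_forall_le
        intro t _
        by_cases ht : (t:ℕ) = κ - 1
        · have : t = lastt := Fin.ext (by simpa [hlastt] using ht)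
          rw [this, hcl]
          simp
        · refine le_trans (Polynomial.natDegree_C_mul_X_pow_le _ _) ?_
          have := t.isLt
          omega
      have hsub : Zset ⊆ Zsm ∪ {⟨κ + 2*δ - 1, by omega⟩} := by
        intro k hk
        by_cases hklt : (k:ℕ) < κ + 2*δ - 1
        · exact Finset.mem_union_left _ (Finset.mem_filter.mpr ⟨hk, hklt⟩)
        · apply Finset.mem_union_right
          simp only [Finset.mem_singleton]
          apply Fin.ext
          have := k.isLt
          simp only []
          omega
      calc Zset.card ≤ (Zsm ∪ _).card := Finset.card_le_card hsub
        _ ≤ Zsm.card + 1 := le_trans (Finset.card_union_le _ _) (by simp)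
        _ ≤ κ - 1 := by omega
    · have hsub : Zset ⊆ Zsm := by
        intro k hk
        refine Finset.mem_filter.mpr ⟨hk, ?_⟩
        by_contra hklt
        have := hulast k hklt
        have hk0 : u k = 0 := by rw [hZ] at hk; simpa using hk
        rw [hk0] at this
        exact hcl this.symm
      have hdeg : p.natDegree ≤ κ - 1 := by
        rw [hp]
        apply Polynomial.natDegree_sum_le_of_forall_le
        intro t _
        refine le_trans (Polynomial.natDegree_C_mul_X_pow_le _ _) ?_
        have := t.isLt
        omega
      calc Zset.card ≤ Zsm.card := Finset.card_le_card hsub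
        _ ≤ κ - 1 := le_trans hZsmcard hdeg
  -- conclude
  have hpart : (Finset.filter (fun k => u k = 0) Finset.univ).card
      + (Finset.filter (fun k => ¬ u k = 0) Finset.univ).card
      = κ + 2*δ := by
    rw [Finset.card_filter_add_card_filter_not]
    simp
  have hham : hammingNorm u = (Finset.filter (fun k => ¬ u k = 0) Finset.univ).card := by
    simp [hammingNorm, Ne]
  have hZeq : Zset.card = (Finset.filter (fun k => u k = 0) Finset.univ).card := by
    rw [hZ]
  rw [hham]
  omega

end upper

/-- MDS ECIC: if q ≥ κ_q(H) + 2δ - 1, then the optimal length of a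
linear δ-error-correcting index code over F_q equals κ_q(H) + 2δ. -/
theorem mds_ecic {m n : ℕ} {F : Type} [Field F] [Fintype F] [DecidableEq F]
    (X : Fin m → Finset (Fin n)) (f : Fin m → Fin n) (hf : ∀ i, f i ∉ X i)
    (hm : 0 < m) (δ : ℕ)
    (hq : minrank F X f + 2 * δ - 1 ≤ Fintype.card F) :
    sInf {N : ℕ | ∃ L : Matrix (Fin n) (Fin N) F, IsECIC X f δ L} =
      minrank F X f + 2 * δ := by
  obtain ⟨L, hL⟩ := ecic_upper X f hf hm δ hq
  have hmem : minrank F X f + 2 * δ ∈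
      {N : ℕ | ∃ L : Matrix (Fin n) (Fin N) F, IsECIC X f δ L} := ⟨L, hL⟩
  refine le_antisymm (Nat.sInf_le hmem) ?_
  obtain ⟨L', hL'⟩ := Nat.sInf_mem (Set.nonempty_of_mem hmem)
  exact ecic_lower X f hf hm δ L' hL'
end

section
/- (Random coding bound) For an ICSI instance (m,n,X,f), if Σ_{i∈[m]} q^{n - |X_i| - 1} < q^N / V_q(N, 2δ), where V_q(N,2δ) = Σ_{ℓ=0}^{2δ} C(N,ℓ)(q-1)^ℓ, then there exists an n×N matrix L over F_q corresponding to a δ-error-correcting index code for this instance. -/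
open Matrix

section Aux
variable {F : Type} [Fintype F] [DecidableEq F]

lemma card_vanish {ι β : Type*} [Fintype ι] [DecidableEq ι] [Fintype β] [Zero β]
    [DecidableEq β] (s : Finset ι) :
    ({g : ι → β | ∀ j ∈ s, g j = 0} : Finset (ι → β)).card
      = Fintype.card β ^ (Fintype.card ι - s.card) := by
  classical
  have e : {g : ι → β // ∀ j ∈ s, g j = 0} ≃ ({j : ι // j ∉ s} → β) :=
    { toFun := fun g j => g.1 j
      invFun := fun h => ⟨fun j => if hj : j ∈ s then 0 else h ⟨j, hj⟩, by
        intro j hj; simp [hj]⟩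
      left_inv := by
        rintro ⟨g, hg⟩
        ext j
        by_cases hj : j ∈ s <;> simp [hj, hg j]
      right_inv := by intro h; ext j; simp [j.2] }
  have := Fintype.card_congr e
  rw [Fintype.card_fun, Fintype.card_subtype_compl, Fintype.card_coe] at this
  rw [← this, Fintype.card_subtype]

lemma card_exact_support {N : ℕ} [Zero F] (S : Finset (Fin N)) :
    ({v : Fin N → F | ∀ j, v j ≠ 0 ↔ j ∈ S} : Finset (Fin N → F)).card
      = (Fintype.card F - 1) ^ S.card := by
  classical
  have e : {v : Fin N → F // ∀ j, v j ≠ 0 ↔ j ∈ S} ≃ ({j : Fin N // j ∈ S} → {x : F // x ≠ 0}) :=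
    { toFun := fun v j => ⟨v.1 j, (v.2 j).2 j.2⟩
      invFun := fun h => ⟨fun j => if hj : j ∈ S then (h ⟨j, hj⟩).1 else 0, by
        intro j
        by_cases hj : j ∈ S <;> simp [hj, (h ⟨j, _⟩).2]⟩
      left_inv := by
        rintro ⟨v, hv⟩
        ext j
        by_cases hj : j ∈ S
        · simp [hj]
        · have hv0 : v j = 0 := not_not.mp (fun h => hj ((hv j).mp h))
          simp [hj, hv0]
      right_inv := by intro h; ext j; simp [j.2] }
  have := Fintype.card_congr e
  rw [Fintype.card_fun, Fintype.card_coe] at this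
  have hc : Fintype.card {x : F // x ≠ 0} = Fintype.card F - 1 := by
    rw [Fintype.card_subtype_compl, Fintype.card_subtype_eq]
  rw [hc] at this
  rw [← this, Fintype.card_subtype]

lemma card_ball {N : ℕ} [Zero F] (r : ℕ) :
    ({v : Fin N → F | hammingNorm v ≤ r} : Finset (Fin N → F)).card
      ≤ ∑ ℓ ∈ Finset.range (r + 1), N.choose ℓ * (Fintype.card F - 1) ^ ℓ := by
  classical
  have key : ∀ ℓ : ℕ, ({v : Fin N → F | hammingNorm v = ℓ} : Finset (Fin N → F)).card
      ≤ N.choose ℓ * (Fintype.card F - 1) ^ ℓ := by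
    intro ℓ
    have hsub : ({v : Fin N → F | hammingNorm v = ℓ} : Finset (Fin N → F)) ⊆
        (Finset.powersetCard ℓ (Finset.univ : Finset (Fin N))).biUnion
          (fun S => ({v : Fin N → F | ∀ j, v j ≠ 0 ↔ j ∈ S} : Finset (Fin N → F))) := by
      intro v hv
      simp only [Finset.mem_filter, Finset.mem_univ, true_and] at hv
      refine Finset.mem_biUnion.mpr ⟨({j : Fin N | v j ≠ 0} : Finset (Fin N)), ?_, ?_⟩
      · refine Finset.mem_powersetCard.mpr ⟨Finset.subset_univ _, ?_⟩
        simpa [hammingNorm] using hv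
      · simp
    calc ({v : Fin N → F | hammingNorm v = ℓ} : Finset (Fin N → F)).card
        ≤ _ := Finset.card_le_card hsub
      _ ≤ ∑ S ∈ Finset.powersetCard ℓ (Finset.univ : Finset (Fin N)),
            ({v : Fin N → F | ∀ j, v j ≠ 0 ↔ j ∈ S} : Finset (Fin N → F)).card :=
          Finset.card_biUnion_le
      _ = ∑ S ∈ Finset.powersetCard ℓ (Finset.univ : Finset (Fin N)),
            (Fintype.card F - 1) ^ ℓ := by
          refine Finset.sum_congr rfl fun S hS => ?_
          rw [card_exact_support, (Finset.mem_powersetCard.mp hS).2]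
      _ = N.choose ℓ * (Fintype.card F - 1) ^ ℓ := by
          rw [Finset.sum_const, Finset.card_powersetCard, Finset.card_univ,
            Fintype.card_fin, smul_eq_mul]
  have hsub2 : ({v : Fin N → F | hammingNorm v ≤ r} : Finset (Fin N → F)) ⊆
      (Finset.range (r + 1)).biUnion
        (fun ℓ => ({v : Fin N → F | hammingNorm v = ℓ} : Finset (Fin N → F))) := by
    intro v hv
    simp only [Finset.mem_filter, Finset.mem_univ, true_and] at hv
    exact Finset.mem_biUnion.mpr ⟨hammingNorm v, Finset.mem_range.mpr (Nat.lt_succ_of_le hv),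
      by simp⟩
  calc ({v : Fin N → F | hammingNorm v ≤ r} : Finset (Fin N → F)).card
      ≤ _ := Finset.card_le_card hsub2
    _ ≤ ∑ ℓ ∈ Finset.range (r + 1),
          ({v : Fin N → F | hammingNorm v = ℓ} : Finset (Fin N → F)).card :=
        Finset.card_biUnion_le
    _ ≤ _ := Finset.sum_le_sum fun ℓ _ => key ℓ

end Aux
/-- random coding bound: if
Σ_i q^{n-|X_i|-1} < q^N / V_q(N,2δ), where V_q(N,2δ) = Σ_{ℓ≤2δ} C(N,ℓ)(q-1)^ℓ,
then there exists an n×N matrix over F_q corresponding to a (δ,H)-ECIC. -/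
theorem random_coding_bound {m n N : ℕ} {F : Type} [Field F] [Fintype F]
    [DecidableEq F]
    (X : Fin m → Finset (Fin n)) (f : Fin m → Fin n) (hf : ∀ i, f i ∉ X i)
    (δ : ℕ)
    (h : (∑ i : Fin m, ((Fintype.card F : ℝ) ^ (n - (X i).card - 1))) <
      (Fintype.card F : ℝ) ^ N /
        (∑ ℓ ∈ Finset.range (2 * δ + 1),
          (N.choose ℓ : ℝ) * ((Fintype.card F : ℝ) - 1) ^ ℓ)) :
    ∃ L : Matrix (Fin n) (Fin N) F,
      ∀ z : Fin n → F, (∃ i : Fin m, (∀ j ∈ X i, z j = 0) ∧ z (f i) ≠ 0) →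
        2 * δ + 1 ≤ hammingNorm (vecMul z L) := by
  classical
  set q := Fintype.card F with hq
  set V := ∑ ℓ ∈ Finset.range (2 * δ + 1), N.choose ℓ * (q - 1) ^ ℓ with hV
  have hq1 : 1 ≤ q := Fintype.card_pos
  -- the bad sets
  set Bad : Fin m → Finset (Fin n → Fin N → F) := fun i =>
    ({L : Fin n → Fin N → F | ∃ z : Fin n → F, (∀ j ∈ X i, z j = 0) ∧ z (f i) ≠ 0 ∧
        hammingNorm (vecMul z (Matrix.of L)) ≤ 2 * δ} : Finset _) with hBad
  -- cardinality bound for each bad set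
  have hbadcard : ∀ i, (Bad i).card ≤ (q ^ N) ^ (n - 1) * (q ^ (n - (X i).card - 1) * V) := by
    intro i
    set fA : Finset (Fin n → Fin N → F) :=
      ({A : Fin n → Fin N → F | ∀ j ∈ ({f i} : Finset (Fin n)), A j = 0} : Finset _) with hfA
    set fC : Finset (Fin n → F) :=
      ({c : Fin n → F | ∀ j ∈ insert (f i) (X i), c j = 0} : Finset _) with hfC
    set fV : Finset (Fin N → F) :=
      ({v : Fin N → F | hammingNorm v ≤ 2 * δ} : Finset _) with hfV
    set Φ : (Fin n → Fin N → F) × ((Fin n → F) × (Fin N → F)) → (Fin n → Fin N → F) :=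
      fun p => fun j => if j = f i then p.2.2 + ∑ j', p.2.1 j' • p.1 j' else p.1 j with hΦ
    have hsub : Bad i ⊆ (fA ×ˢ (fC ×ˢ fV)).image Φ := by
      intro L hL
      simp only [hBad, Finset.mem_filter, Finset.mem_univ, true_and] at hL
      obtain ⟨z, hz0, hzf, hwt⟩ := hL
      set a := z (f i) with ha
      set A : Fin n → Fin N → F := Function.update L (f i) 0 with hA
      set c : Fin n → F := fun j => if j = f i then 0 else -(a⁻¹ * z j) with hc
      set v : Fin N → F := a⁻¹ • vecMul z (Matrix.of L) with hv
      have hw : vecMul z (Matrix.of L) = ∑ j', z j' • L j' := by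
        ext k
        simp [Matrix.vecMul, dotProduct, Finset.sum_apply]
      refine Finset.mem_image.mpr ⟨⟨A, c, v⟩, ?_, ?_⟩
      · refine Finset.mem_product.mpr ⟨?_, Finset.mem_product.mpr ⟨?_, ?_⟩⟩
        · simp only [hfA, Finset.mem_filter, Finset.mem_univ, true_and, Finset.mem_singleton]
          intro j hj; subst hj; simp [hA]
        · simp only [hfC, Finset.mem_filter, Finset.mem_univ, true_and, Finset.mem_insert]
          rintro j (hj | hj)
          · simp [hc, hj]
          · have hjne : j ≠ f i := fun hh => hf i (hh ▸ hj)
            simp [hc, hjne, hz0 j hj]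
        · simp only [hfV, Finset.mem_filter, Finset.mem_univ, true_and]
          exact le_trans hammingNorm_smul_le_hammingNorm hwt
      · -- Φ (A, c, v) = L
        funext j
        simp only [hΦ]
        by_cases hj : j = f i
        · subst hj
          simp only [if_pos rfl]
          have hsum : v + ∑ j', c j' • A j'
              = ∑ j', ((a⁻¹ * z j') • L j' + c j' • A j') := by
            rw [Finset.sum_add_distrib]
            congr 1
            rw [hv, hw, Finset.smul_sum]
            exact Finset.sum_congr rfl fun j' _ => smul_smul _ _ _
          rw [hsum, Finset.sum_eq_single (f i)]
          · simp [hc, hA, ← ha, inv_mul_cancel₀ hzf]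
          · intro b _ hb
            simp [hc, hA, hb, Function.update_of_ne hb, neg_smul]
          · simp
        · simp [hA, Function.update_of_ne hj, hj]
    have hcA : fA.card = (q ^ N) ^ (n - 1) := by
      have hv2 := card_vanish (β := Fin N → F) ({f i} : Finset (Fin n))
      simp only [Fintype.card_fun, Fintype.card_fin, Finset.card_singleton] at hv2
      rw [hfA]
      convert hv2 using 2
      ext x
      simp
    have hcC : fC.card = q ^ (n - (X i).card - 1) := by
      have hv2 := card_vanish (β := F) (insert (f i) (X i))
      rw [Finset.card_insert_of_notMem (hf i), Fintype.card_fin] at hv2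
      rw [hfC, Nat.sub_sub]
      convert hv2 using 2
      ext x
      simp
    have hcV : fV.card ≤ V := card_ball (2 * δ)
    calc (Bad i).card ≤ ((fA ×ˢ (fC ×ˢ fV)).image Φ).card := Finset.card_le_card hsub
      _ ≤ (fA ×ˢ (fC ×ˢ fV)).card := Finset.card_image_le
      _ = fA.card * (fC.card * fV.card) := by
          rw [Finset.card_product, Finset.card_product]
      _ ≤ (q ^ N) ^ (n - 1) * (q ^ (n - (X i).card - 1) * V) := by
          rw [hcA, hcC]
          exact Nat.mul_le_mul_left _ (Nat.mul_le_mul_left _ hcV)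
  -- from the real hypothesis, a strict nat inequality
  have hq0 : (0 : ℝ) < (q : ℝ) := by exact_mod_cast (Fintype.card_pos : 0 < q)
  have hq2 : (2 : ℕ) ≤ q := Fintype.one_lt_card
  have hVpos : (0 : ℝ) < ∑ ℓ ∈ Finset.range (2 * δ + 1),
      (N.choose ℓ : ℝ) * ((q : ℝ) - 1) ^ ℓ := by
    refine Finset.sum_pos' (fun ℓ _ => mul_nonneg (Nat.cast_nonneg _)
      (pow_nonneg (by
        have : (2 : ℝ) ≤ (q : ℝ) := by exact_mod_cast hq2
        linarith) _)) ⟨0, Finset.mem_range.mpr (by omega), by simp⟩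
  have hnat : (∑ i : Fin m, (q ^ N) ^ (n - 1) * (q ^ (n - (X i).card - 1) * V))
      < (q ^ N) ^ n := by
    rcases Nat.eq_zero_or_pos m with hm | hm
    · subst hm
      simp only [Finset.univ_eq_empty, Finset.sum_empty]
      exact pow_pos (pow_pos Fintype.card_pos N) n
    · have hn1 : 1 ≤ n := Nat.one_le_iff_ne_zero.mpr fun hn0 => by
        exact absurd ((f ⟨0, hm⟩).isLt) (by omega)
      rw [hV, ← Nat.cast_lt (α := ℝ)]
      push_cast [Nat.cast_sub hq1]
      have hmul : (∑ i : Fin m, ((q : ℝ) ^ (n - (X i).card - 1))) *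
          (∑ ℓ ∈ Finset.range (2 * δ + 1), (N.choose ℓ : ℝ) * ((q : ℝ) - 1) ^ ℓ)
          < (q : ℝ) ^ N := (lt_div_iff₀ hVpos).mp h
      have hC : (0 : ℝ) < ((q : ℝ) ^ N) ^ (n - 1) := by positivity
      calc (∑ i : Fin m, ((q : ℝ) ^ N) ^ (n - 1) * ((q : ℝ) ^ (n - (X i).card - 1) *
              (∑ ℓ ∈ Finset.range (2 * δ + 1), (N.choose ℓ : ℝ) * ((q : ℝ) - 1) ^ ℓ)))
          = ((q : ℝ) ^ N) ^ (n - 1) * ((∑ i : Fin m, (q : ℝ) ^ (n - (X i).card - 1)) *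
              (∑ ℓ ∈ Finset.range (2 * δ + 1), (N.choose ℓ : ℝ) * ((q : ℝ) - 1) ^ ℓ)) := by
            rw [← Finset.mul_sum, ← Finset.sum_mul]
        _ < ((q : ℝ) ^ N) ^ (n - 1) * (q : ℝ) ^ N := mul_lt_mul_of_pos_left hmul hC
        _ = ((q : ℝ) ^ N) ^ n := by
            rw [← pow_succ]
            congr 1
            omega
  -- pick a good matrix
  have hlt : ((Finset.univ : Finset (Fin m)).biUnion Bad).card
      < Fintype.card (Fin n → Fin N → F) := by
    calc ((Finset.univ : Finset (Fin m)).biUnion Bad).card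
        ≤ ∑ i : Fin m, (Bad i).card := Finset.card_biUnion_le
      _ ≤ ∑ i : Fin m, (q ^ N) ^ (n - 1) * (q ^ (n - (X i).card - 1) * V) :=
          Finset.sum_le_sum fun i _ => hbadcard i
      _ < (q ^ N) ^ n := hnat
      _ = Fintype.card (Fin n → Fin N → F) := by simp [Fintype.card_fun, hq]
  obtain ⟨L, hL⟩ : ∃ L : Fin n → Fin N → F, L ∉ (Finset.univ : Finset (Fin m)).biUnion Bad := by
    by_contra hcon
    push_neg at hcon
    have hsub : (Finset.univ : Finset (Fin n → Fin N → F)) ⊆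
        (Finset.univ : Finset (Fin m)).biUnion Bad := fun x _ => hcon x
    have := Finset.card_le_card hsub
    rw [Finset.card_univ] at this
    omega
  refine ⟨Matrix.of L, fun z hz => ?_⟩
  obtain ⟨i, hz0, hzf⟩ := hz
  by_contra hcon
  push_neg at hcon
  have hmem : L ∈ Bad i := by
    simp only [hBad, Finset.mem_filter, Finset.mem_univ, true_and]
    exact ⟨z, hz0, hzf, Nat.lt_succ_iff.mp hcon⟩
  exact hL (Finset.mem_biUnion.mpr ⟨i, Finset.mem_univ _, hmem⟩)
end

section
/- Suppose L corresponds to a δ-error-correcting index code, y_i = xL + ε_i with wt(ε_i) ≤ δ, and receiver R_i knows some vector ε̂ ∈ L_i(ε_i) = ε_i + span{L_j : j ∈ Y_i}, together with y_i and x_{X_i}. Then x_{f(i)} is uniquely determined: if x' ∈ F_q^n satisfies x'_{X_i} = x_{X_i} and y_i = x'L + ε̂' for some ε̂' ∈ L_i(ε_i), then x'_{f(i)} = x_{f(i)}. -/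
open Matrix

/-- if L is a (δ,H)-ECIC, y_i = xL + ε_i with wt(ε_i) ≤ δ, and the
receiver knows some ε̂ in the coset L_i(ε_i) = ε_i + span{L_j : j ∈ Y_i}, then
x_{f(i)} is uniquely determined: any x' agreeing with x on X_i and satisfying
y_i = x'L + ε̂' for some ε̂' ∈ L_i(ε_i) has x'_{f(i)} = x_{f(i)}. -/
theorem coset_determines_message {m n N : ℕ} {F : Type} [Field F] [Fintype F]
    [DecidableEq F]
    (X : Fin m → Finset (Fin n)) (f : Fin m → Fin n) (hf : ∀ i, f i ∉ X i)
    (δ : ℕ) (L : Matrix (Fin n) (Fin N) F)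
    (hL : ∀ z : Fin n → F, (∃ i : Fin m, (∀ j ∈ X i, z j = 0) ∧ z (f i) ≠ 0) →
      2 * δ + 1 ≤ hammingNorm (vecMul z L))
    (i : Fin m) (x : Fin n → F) (ε y : Fin N → F)
    (hy : y = vecMul x L + ε) (hε : hammingNorm ε ≤ δ)
    (x' : Fin n → F) (hx' : ∀ j ∈ X i, x' j = x j)
    (ε' : Fin N → F)
    (hε' : ε' - ε ∈ Submodule.span F (L '' {j : Fin n | j ≠ f i ∧ j ∉ X i}))
    (hy' : y = vecMul x' L + ε') :
    x' (f i) = x (f i) := by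
  by_contra hne
  replace hε' := (Finsupp.mem_span_image_iff_linearCombination (R := F) (v := (L : Fin n → Fin N → F))).mp hε'
  obtain ⟨l, hl, hlc⟩ := hε'
  set c : Fin n → F := fun j => l j with hc
  have hcL : vecMul c L = ε' - ε := by
    rw [← hlc]
    ext k
    simp [Finsupp.linearCombination_apply, Finsupp.sum, vecMul, dotProduct, hc]
    erw [Finsupp.linearCombination_apply, Finsupp.sum, Finset.sum_apply]
    simp only [Pi.smul_apply, smul_eq_mul]
    rw [Finset.sum_subset (Finset.subset_univ l.support)]
    intro j _ hj
    simp [Finsupp.notMem_support_iff.mp hj]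
  have hcz : ∀ j, j ∉ {j : Fin n | j ≠ f i ∧ j ∉ X i} → c j = 0 := by
    intro j hj
    simpa [hc] using Finsupp.notMem_support_iff.mp (fun h => hj (hl h))
  set w : Fin n → F := (x - x') - c with hw
  have hwL : vecMul w L = 0 := by
    have h1 : vecMul x L + ε = vecMul x' L + ε' := by rw [← hy, ← hy']
    have : vecMul x L - vecMul x' L = ε' - ε := by
      apply sub_eq_sub_iff_add_eq_add.mpr
      linear_combination h1
    simp [hw, sub_vecMul, hcL, this]
  have hkey := hL w ⟨i, ?_, ?_⟩
  · rw [hwL] at hkey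
    simp [hammingNorm] at hkey
  · intro j hj
    have : c j = 0 := hcz j (by simp [Set.mem_setOf_eq]; intro _; exact hj)
    simp [hw, hx' j hj, this]
  · have : c (f i) = 0 := hcz (f i) (by simp)
    simp [hw, this, sub_eq_zero]
    exact fun h => hne h.symm
end

section
/- (Syndrome decoding correctness) Let L correspond to a δ-error-correcting index code, let C_i = span({L_{f(i)}} ∪ {L_j : j ∈ Y_i}) with parity check matrix H^{(i)} (i.e., C_i = ker H^{(i)} as a row space condition), and let y_i = xL + ε_i with wt(ε_i) ≤ δ. Let ε̂ be any minimum-Hamming-weight solution of H^{(i)} ε̂^T = H^{(i)}(y_i - x_{X_i}L_{X_i})^T. Then any x̂ ∈ F_q^n with x̂_{X_i} = x_{X_i} and y_i = x̂L + ε̂ satisfies x̂_{f(i)} = x_{f(i)}. -/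
open Matrix

/-- syndrome decoding correctness: with C_i = span({L_{f(i)}} ∪
{L_j : j ∈ Y_i}) and a parity check matrix H⁽ⁱ⁾ of C_i, if y_i = xL + ε_i with
wt(ε_i) ≤ δ and εh is a minimum-weight solution of H⁽ⁱ⁾εhᵀ = H⁽ⁱ⁾(y_i - x_{X_i}L_{X_i})ᵀ,
then any xh with xh_{X_i} = x_{X_i} and y_i = xhL + εh satisfies xh_{f(i)} = x_{f(i)}. -/
theorem syndrome_decoding_correct {m n N r : ℕ} {F : Type} [Field F] [Fintype F]
    [DecidableEq F]
    (X : Fin m → Finset (Fin n)) (f : Fin m → Fin n) (hf : ∀ i, f i ∉ X i)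
    (δ : ℕ) (L : Matrix (Fin n) (Fin N) F)
    (hL : ∀ z : Fin n → F, (∃ i : Fin m, (∀ j ∈ X i, z j = 0) ∧ z (f i) ≠ 0) →
      2 * δ + 1 ≤ hammingNorm (vecMul z L))
    (i : Fin m) (H : Matrix (Fin r) (Fin N) F)
    (hH : ∀ v : Fin N → F,
      v ∈ Submodule.span F ({L (f i)} ∪ L '' {j : Fin n | j ≠ f i ∧ j ∉ X i}) ↔
        H.mulVec v = 0)
    (x : Fin n → F) (ε y : Fin N → F)
    (hy : y = vecMul x L + ε) (hε : hammingNorm ε ≤ δ)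
    (εh : Fin N → F)
    (hsynd : H.mulVec εh = H.mulVec (y - ∑ j ∈ X i, x j • L j))
    (hmin : ∀ e : Fin N → F,
      H.mulVec e = H.mulVec (y - ∑ j ∈ X i, x j • L j) →
        hammingNorm εh ≤ hammingNorm e)
    (xh : Fin n → F) (hxh : ∀ j ∈ X i, xh j = x j)
    (hyh : y = vecMul xh L + εh) :
    xh (f i) = x (f i) := by
  by_contra hne
  -- the difference vector
  set z : Fin n → F := xh - x with hz
  have hzX : ∀ j ∈ X i, z j = 0 := by
    intro j hj; simp [hz, hxh j hj]
  have hzf : z (f i) ≠ 0 := sub_ne_zero.mpr hne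
  have h1 : vecMul x L + ε = vecMul xh L + εh := hy.symm.trans hyh
  have hzL : vecMul z L = ε - εh := by
    rw [hz, Matrix.sub_vecMul]
    linear_combination -h1
  have hbig : 2 * δ + 1 ≤ hammingNorm (ε - εh) := by
    rw [← hzL]; exact hL z ⟨i, hzX, hzf⟩
  -- ε satisfies the syndrome equation
  have hmem : (vecMul x L - ∑ j ∈ X i, x j • L j) ∈
      Submodule.span F ({L (f i)} ∪ L '' {j : Fin n | j ≠ f i ∧ j ∉ X i}) := by
    have hvs : vecMul x L = ∑ j, x j • L j := by
      ext k; simp [Matrix.vecMul, dotProduct, Finset.sum_apply]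
    rw [hvs, ← Finset.sum_sdiff_eq_sub (Finset.subset_univ _)]
    refine Submodule.sum_mem _ ?_
    intro j hj
    rw [Finset.mem_sdiff] at hj
    refine Submodule.smul_mem _ _ (Submodule.subset_span ?_)
    by_cases hjf : j = f i
    · exact Or.inl (by simp [hjf])
    · exact Or.inr ⟨j, ⟨hjf, hj.2⟩, rfl⟩
  have hsε : H.mulVec ε = H.mulVec (y - ∑ j ∈ X i, x j • L j) := by
    have heq : y - ∑ j ∈ X i, x j • L j =
        ε + (vecMul x L - ∑ j ∈ X i, x j • L j) := by
      rw [hy]; ring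
    rw [heq, Matrix.mulVec_add, (hH _).mp hmem, add_zero]
  have hεh : hammingNorm εh ≤ δ := le_trans (hmin ε hsε) hε
  have htri : hammingNorm (ε - εh) ≤ hammingNorm ε + hammingNorm εh := by
    calc hammingNorm (ε - εh) = hammingDist ε εh := by rw [hammingDist_comm, hammingDist_eq_hammingNorm, neg_add_eq_sub]
    _ ≤ hammingDist ε 0 + hammingDist 0 εh := hammingDist_triangle ε 0 εh
    _ = hammingNorm ε + hammingNorm εh := by
        rw [hammingDist_zero_right, hammingDist_zero_left]
  omega
end

section
/- If the minimum-weight solution ε̂ of the syndrome equation H^{(i)} ε̂^T = β^{(i)} satisfies wt(ε̂) ≤ δ and the true error ε_i satisfies wt(ε_i) ≤ δ, and L corresponds to a δ-error-correcting index code, then ε̂ - ε_i ∈ span{L_j : j ∈ Y_i}, i.e., ε̂ ∈ L_i(ε_i). -/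
open Matrix

/-- if the minimum-weight solution εh of the syndrome equation
H⁽ⁱ⁾εhᵀ = β⁽ⁱ⁾ (with β⁽ⁱ⁾ = H⁽ⁱ⁾(y_i - x_{X_i}L_{X_i})ᵀ) has wt(εh) ≤ δ, the true
error ε_i has wt(ε_i) ≤ δ, and L is a (δ,H)-ECIC, then
εh - ε_i ∈ span{L_j : j ∈ Y_i}, i.e. εh ∈ L_i(ε_i). -/
theorem syndrome_solution_in_coset {m n N r : ℕ} {F : Type} [Field F] [Fintype F]
    [DecidableEq F]
    (X : Fin m → Finset (Fin n)) (f : Fin m → Fin n) (hf : ∀ i, f i ∉ X i)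
    (δ : ℕ) (L : Matrix (Fin n) (Fin N) F)
    (hL : ∀ z : Fin n → F, (∃ i : Fin m, (∀ j ∈ X i, z j = 0) ∧ z (f i) ≠ 0) →
      2 * δ + 1 ≤ hammingNorm (vecMul z L))
    (i : Fin m) (H : Matrix (Fin r) (Fin N) F)
    (hH : ∀ v : Fin N → F,
      v ∈ Submodule.span F ({L (f i)} ∪ L '' {j : Fin n | j ≠ f i ∧ j ∉ X i}) ↔
        H.mulVec v = 0)
    (x : Fin n → F) (ε y : Fin N → F)
    (hy : y = vecMul x L + ε) (hε : hammingNorm ε ≤ δ)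
    (εh : Fin N → F) (hεh : hammingNorm εh ≤ δ)
    (hsynd : H.mulVec εh = H.mulVec (y - ∑ j ∈ X i, x j • L j)) :
    εh - ε ∈ Submodule.span F (L '' {j : Fin n | j ≠ f i ∧ j ∉ X i}) := by
  set S : Set (Fin n) := {j : Fin n | j ≠ f i ∧ j ∉ X i} with hSdef
  have hvec : ∀ z : Fin n → F, vecMul z L = ∑ j : Fin n, z j • L j := by
    intro z
    ext k
    simp [vecMul, dotProduct, Finset.sum_apply]
  -- Step 1: (y - ∑_{X i}) - ε lies in the big span.
  have hsplit : y - (∑ j ∈ X i, x j • L j) - ε = ∑ j ∈ Finset.univ \ X i, x j • L j := by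
    rw [hy, hvec]
    have := Finset.sum_sdiff (f := fun j => x j • L j) (Finset.subset_univ (X i))
    rw [← this]
    abel
  have h1 : y - (∑ j ∈ X i, x j • L j) - ε ∈
      Submodule.span F ({L (f i)} ∪ L '' S) := by
    rw [hsplit]
    refine Submodule.sum_mem _ (fun j hj => Submodule.smul_mem _ _ ?_)
    apply Submodule.subset_span
    by_cases hji : j = f i
    · left; rw [hji]; rfl
    · right
      exact ⟨j, ⟨hji, by simpa using hj⟩, rfl⟩
  have h0 : H.mulVec (y - (∑ j ∈ X i, x j • L j) - ε) = 0 := (hH _).mp h1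
  have hsub : H.mulVec (εh - ε) = 0 := by
    rw [Matrix.mulVec_sub, hsynd, ← Matrix.mulVec_sub, h0]
  have hmem : εh - ε ∈ Submodule.span F ({L (f i)} ∪ L '' S) := (hH _).mpr hsub
  rw [Submodule.span_union, Submodule.mem_sup] at hmem
  obtain ⟨a, ha, w, hw, hsum⟩ := hmem
  rw [Submodule.mem_span_singleton] at ha
  obtain ⟨c, rfl⟩ := ha
  by_cases hc : c = 0
  · rw [← hsum, hc, zero_smul, zero_add]; exact hw
  -- c ≠ 0: derive contradiction using the ECIC property
  exfalso
  obtain ⟨l, hls, hlw⟩ := (Finsupp.mem_span_image_iff_linearCombination F).mp hw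
  have hlfi : l (f i) = 0 := by
    by_contra h
    have : f i ∈ S := hls (Finsupp.mem_support_iff.mpr h)
    exact this.1 rfl
  have hw' : w = ∑ j : Fin n, l j • L j := by
    rw [← hlw]; erw [Finsupp.linearCombination_apply]; rw [Finsupp.sum_fintype]
    intro j; rw [zero_smul]
  set z : Fin n → F := fun j => if j = f i then c else l j with hzdef
  have hzL : vecMul z L = εh - ε := by
    rw [hvec, ← hsum, hw']
    have : ∀ j : Fin n, z j • L j = l j • L j + (if j = f i then c • L (f i) else 0) := by
      intro j
      by_cases h : j = f i
      · subst h; simp [hzdef, hlfi]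
      · simp [hzdef, h]
    rw [Finset.sum_congr rfl (fun j _ => this j), Finset.sum_add_distrib,
      Finset.sum_ite_eq' Finset.univ (f i)]
    simp [add_comm]
  have hbig : 2 * δ + 1 ≤ hammingNorm (εh - ε) := by
    rw [← hzL]
    refine hL z ⟨i, ?_, ?_⟩
    · intro j hj
      have hjfi : j ≠ f i := fun h => hf i (h ▸ hj)
      have : l j = 0 := by
        by_contra h
        exact (hls (Finsupp.mem_support_iff.mpr h)).2 hj
      simp [hzdef, hjfi, this]
    · simpa [hzdef] using hc
  have hsmall : hammingNorm (εh - ε) ≤ 2 * δ := by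
    have := hammingDist_triangle εh 0 ε
    rw [hammingDist_zero_right, hammingDist_zero_left] at this
    rw [sub_eq_neg_add, ← hammingDist_eq_hammingNorm, hammingDist_comm]
    omega
  omega
end

section
/- If L is an n×N matrix such that for each i ∈ [m] there exists v^i ∈ F_q^n with supp(v^i) ⊆ X_i and v^i + e_{f(i)} in the column span of L, then every receiver can decode in the error-free setting: for all x, x' ∈ F_q^n with x_{X_i} = x'_{X_i} and xL = x'L, we have x_{f(i)} = x'_{f(i)}. -/
open Matrix

/-- if for each i there is v^i with supp(v^i) ⊆ X_i and
v^i + e_{f(i)} in the column span of L, then every receiver decodes in the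
error-free setting: x_{X_i} = x'_{X_i} and xL = x'L imply x_{f(i)} = x'_{f(i)}. -/
theorem column_span_implies_decoding {m n N : ℕ} {F : Type} [Field F] [Fintype F]
    [DecidableEq F]
    (X : Fin m → Finset (Fin n)) (f : Fin m → Fin n) (hf : ∀ i, f i ∉ X i)
    (L : Matrix (Fin n) (Fin N) F)
    (hv : ∀ i : Fin m, ∃ v : Fin n → F,
      Function.support v ⊆ (X i : Set (Fin n)) ∧
      v + Pi.single (f i) (1 : F) ∈
        Submodule.span F (Set.range fun j : Fin N => fun i' : Fin n => L i' j)) :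
    ∀ i : Fin m, ∀ x x' : Fin n → F, (∀ j ∈ X i, x j = x' j) →
      vecMul x L = vecMul x' L → x (f i) = x' (f i) := by
  intro i x x' hX hL
  obtain ⟨v, hsupp, hspan⟩ := hv i
  set d : Fin n → F := x - x' with hd
  -- d vanishes on X i
  have hdX : ∀ j ∈ X i, d j = 0 := by
    intro j hj; simp [hd, hX j hj]
  -- linear functional w ↦ ∑ k, d k * w k
  let φ : (Fin n → F) →ₗ[F] F :=
    { toFun := fun w => ∑ k, d k * w k
      map_add' := by intro a b; simp [mul_add, Finset.sum_add_distrib]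
      map_smul' := by
        intro c a
        simp [Finset.mul_sum, Pi.smul_apply, smul_eq_mul]
        ring_nf
        congr 1; ext k; ring }
  -- φ vanishes on every column of L
  have hcol : ∀ j : Fin N, φ (fun i' => L i' j) = 0 := by
    intro j
    have := congrFun hL j
    simp only [vecMul, dotProduct] at this
    have : ∑ k, d k * L k j = 0 := by
      simp only [hd, Pi.sub_apply, sub_mul]
      rw [Finset.sum_sub_distrib, this, sub_self]
    simpa [φ] using this
  have hφspan : φ (v + Pi.single (f i) (1 : F)) = 0 := by
    have : ∀ w ∈ Submodule.span F (Set.range fun j : Fin N => fun i' : Fin n => L i' j),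
        φ w = 0 := by
      intro w hw
      induction hw using Submodule.span_induction with
      | mem w hw => obtain ⟨j, rfl⟩ := hw; exact hcol j
      | zero => simp
      | add a b _ _ ha hb => simp [ha, hb]
      | smul c a _ ha => simp [ha]
    exact this _ hspan
  have hφv : φ v = 0 := by
    show ∑ k, d k * v k = 0
    apply Finset.sum_eq_zero
    intro k _
    by_cases hk : v k = 0
    · simp [hk]
    · have : k ∈ X i := hsupp hk
      simp [hdX k this]
  have hφe : φ (Pi.single (f i) (1 : F)) = d (f i) := by
    simp [φ, Pi.single_apply, Finset.sum_ite_eq', mul_comm]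
  have : d (f i) = 0 := by
    have := hφspan
    rw [map_add, hφv, hφe, zero_add] at this
    exact this
  have := this
  simpa [hd, sub_eq_zero] using this
end

section
/- Conversely, if an n×N matrix L over F_q satisfies wt(zL) ≥ 1 for all z ∈ I(q,H) = {z : ∃i, z_{X_i} = 0, z_{f(i)} ≠ 0}, then for each i ∈ [m] there exists v^i ∈ F_q^n with supp(v^i) ⊆ X_i such that v^i + e_{f(i)} lies in the column span of L. -/
open Matrix

/-- conversely, if wt(zL) ≥ 1 for all z ∈ I(q,H), then for each i
there exists v^i with supp(v^i) ⊆ X_i such that v^i + e_{f(i)} lies in the column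
span of L. -/
theorem decoding_implies_column_span {m n N : ℕ} {F : Type} [Field F] [Fintype F]
    [DecidableEq F]
    (X : Fin m → Finset (Fin n)) (f : Fin m → Fin n) (hf : ∀ i, f i ∉ X i)
    (L : Matrix (Fin n) (Fin N) F)
    (hL : ∀ z : Fin n → F, (∃ i : Fin m, (∀ j ∈ X i, z j = 0) ∧ z (f i) ≠ 0) →
      1 ≤ hammingNorm (vecMul z L)) :
    ∀ i : Fin m, ∃ v : Fin n → F,
      Function.support v ⊆ (X i : Set (Fin n)) ∧
      v + Pi.single (f i) (1 : F) ∈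
        Submodule.span F (Set.range fun j : Fin N => fun i' : Fin n => L i' j) := by
  intro i
  set W : Submodule F (Fin n → F) :=
    Submodule.span F (Set.range fun j : Fin N => fun i' : Fin n => L i' j) with hW
  -- P: vectors supported on X i
  let P : Submodule F (Fin n → F) :=
    { carrier := {v | ∀ j, j ∉ X i → v j = 0}
      add_mem' := fun ha hb j hj => by simp [ha j hj, hb j hj]
      zero_mem' := fun j _ => rfl
      smul_mem' := fun c v hv j hj => by simp [hv j hj] }
  have key : Pi.single (f i) (1 : F) ∈ W ⊔ P := by
    by_contra hx
    obtain ⟨φ, hφx, hφbot⟩ :=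
      (W ⊔ P).exists_dual_map_eq_bot_of_notMem hx inferInstance
    have hφ0 : ∀ w ∈ W ⊔ P, φ w = 0 := by
      intro w hw
      have : φ w ∈ (W ⊔ P).map φ := Submodule.mem_map_of_mem hw
      rwa [hφbot, Submodule.mem_bot] at this
    set z : Fin n → F := fun j => φ (Pi.single j 1) with hz
    have hrep : ∀ w : Fin n → F, φ w = ∑ j, w j * z j := by
      intro w
      rw [LinearMap.pi_apply_eq_sum_univ φ w]
      refine Finset.sum_congr rfl fun j _ => ?_
      rw [smul_eq_mul]
      have harg : (fun k => if j = k then (1:F) else 0) = Pi.single j 1 := by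
        funext k; simp [Pi.single_apply, eq_comm]
      rw [harg]
    have hz1 : ∀ j ∈ X i, z j = 0 := by
      intro j hj
      have hmem : (Pi.single j (1:F)) ∈ P := by
        intro k hk
        exact Pi.single_eq_of_ne (by rintro rfl; exact hk hj) 1
      exact hφ0 _ (Submodule.mem_sup_right hmem)
    have hz2 : z (f i) ≠ 0 := hφx
    have hzero : vecMul z L = 0 := by
      funext j'
      have hcol : (fun i' : Fin n => L i' j') ∈ W :=
        Submodule.subset_span ⟨j', rfl⟩
      have := hφ0 _ (Submodule.mem_sup_left hcol)
      rw [hrep] at this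
      have : ∑ k, L k j' * z k = 0 := this
      simpa [Matrix.vecMul, dotProduct, mul_comm] using this
    have := hL z ⟨i, hz1, hz2⟩
    rw [hzero] at this
    simp at this
  obtain ⟨w, hw, p, hp, hwp⟩ := Submodule.mem_sup.mp key
  refine ⟨-p, ?_, ?_⟩
  · intro j hj
    by_contra hjX
    exact hj (by simp [hp j hjX])
  · have : -p + Pi.single (f i) (1 : F) = w := by
      rw [← hwp]; abel
    rw [this]; exact hw
end
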